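/- If T is a unitary operator on a real Hilbert space H and x ∈ H, then the ergodic averages (1/n)·∑_{k=1}^n T^k(x) converge in norm to the orthogonal projection of x onto the closed subspace {y ∈ H : T(y) = y} of T-fixed vectors. -/

import Mathlib

open Filter Finset
open scoped Topology

/-- Von Neumann mean ergodic theorem: for a unitary operator `T` on a real Hilbert
space `H` and `x ∈ H`, the ergodic averages `(1/n) ∑_{k=1}^n T^k x` converge in norm
to the orthogonal projection of `x` onto the closed subspace of `T`-fixed vectors. -/
theorem stmt0 {H : Type*} [NormedAddCommGroup H] [InnerProductSpace ℝ H] [CompleteSpace H]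
    (T : H ≃ₗᵢ[ℝ] H) (x : H) :
    ∃ p : H, T p = p ∧ (∀ y : H, T y = y → inner ℝ (x - p) y = (0 : ℝ)) ∧
      Tendsto (fun n : ℕ => (n : ℝ)⁻¹ • ∑ k ∈ Finset.Icc 1 n, (T ^ k) x)
        atTop (𝓝 p) := by
  set f : H →L[ℝ] H := T.toLinearIsometry.toContinuousLinearMap with hf
  have hfx : ∀ z, f z = T z := fun z => rfl
  have hnorm : ‖f‖ ≤ 1 := by
    apply ContinuousLinearMap.opNorm_le_bound _ zero_le_one
    intro z
    simp [hfx, one_mul]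
  set p : H := ((f.eqLocus (1 : H →L[ℝ] H)).orthogonalProjectionOnto (T x) : H) with hp
  have hpfix : f p = p := ((f.eqLocus (1 : H →L[ℝ] H)).orthogonalProjectionOnto (T x)).2
  refine ⟨p, by rw [← hfx]; exact hpfix, ?_, ?_⟩
  · intro y hy
    have hy' : y ∈ f.eqLocus (1 : H →L[ℝ] H) := by
      show f y = y
      rw [hfx, hy]
    have horth : inner ℝ (T x - p) y = (0 : ℝ) :=
      Submodule.starProjection_inner_eq_zero (T x) y hy'
    have hxy : inner ℝ x y = (inner ℝ (T x) y : ℝ) := by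
      calc (inner ℝ x y : ℝ) = inner ℝ (T x) (T y) := (T.inner_map_map x y).symm
        _ = inner ℝ (T x) y := by rw [hy]
    rw [inner_sub_left, hxy, ← inner_sub_left]
    exact horth
  · have key := f.tendsto_birkhoffAverage_orthogonalProjection hnorm (T x)
    have heq : ∀ n : ℕ, birkhoffAverage ℝ f _root_.id n (T x)
        = (n : ℝ)⁻¹ • ∑ k ∈ Finset.Icc 1 n, (T ^ k) x := by
      intro n
      unfold birkhoffAverage birkhoffSum
      congr 1
      have : Finset.Icc 1 n = Finset.Ico 1 (n + 1) := by
        rw [Finset.Ico_add_one_right_eq_Icc]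
      rw [this, Finset.sum_Ico_eq_sum_range]
      simp only [Nat.add_sub_cancel]
      refine Finset.sum_congr rfl fun k _ => ?_
      have hit : ∀ m : ℕ, ∀ z : H, f^[m] z = (T ^ m) z := by
        intro m
        induction m with
        | zero => intro z; simp
        | succ m ih =>
          intro z
          rw [Function.iterate_succ_apply, hfx]
          rw [ih (T z), pow_succ, LinearIsometryEquiv.coe_mul]
          rfl
      have h1 : f^[k] (T x) = (T ^ (1 + k)) x := by
        rw [hit k (T x), add_comm, pow_succ, LinearIsometryEquiv.coe_mul]
        rfl
      simpa using h1
    exact (funext heq ▸ key : _)
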